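/- The operator L₁ defined on C² 2π-periodic functions by L₁[μ](s) = (1/(2π)) ∫_{-π}^{π} E_{π-s}[μ](t) dt satisfies L₁[cos(mt)](s) = (-1)^{m+1} m cos(ms) and L₁[sin(mt)](s) = (-1)^m m sin(ms) for every natural number m. -/

import Mathlib

open Real MeasureTheory

/-- Partial Dirichlet-type kernel. -/
noncomputable def Dker (k : ℕ) (t : ℝ) : ℝ :=
  1 + 2 * ∑ j ∈ Finset.range k, Real.cos ((j + 1) * t)

/-- Fejér-type kernel (unnormalized). -/
noncomputable def Gker (m : ℕ) (t : ℝ) : ℝ := ∑ k ∈ Finset.range m, Dker k t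

lemma Dker_cont (k : ℕ) : Continuous (Dker k) := by
  unfold Dker
  fun_prop

lemma Gker_cont (m : ℕ) : Continuous (Gker m) :=
  continuous_finset_sum _ (fun k _ => Dker_cont k)

lemma Dker_mul (k : ℕ) (t : ℝ) :
    (1 - Real.cos t) * Dker k t = Real.cos (k * t) - Real.cos ((k + 1) * t) := by
  induction k with
  | zero => simp [Dker]
  | succ k ih =>
    have hs : Dker (k + 1) t = Dker k t + 2 * Real.cos ((k + 1) * t) := by
      simp [Dker, Finset.sum_range_succ]; ring
    have h1 : ((k : ℝ) + 1 + 1) * t = ((k : ℝ) + 1) * t + t := by ring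
    have h2 : (k : ℝ) * t = ((k : ℝ) + 1) * t - t := by ring
    have e1 := Real.cos_add (((k : ℝ) + 1) * t) t
    have e2 := Real.cos_sub (((k : ℝ) + 1) * t) t
    push_cast
    push_cast at ih
    rw [hs, h1, e1, mul_add, ih, h2, e2]
    ring

lemma Gker_mul (m : ℕ) (t : ℝ) :
    (1 - Real.cos t) * Gker m t = 1 - Real.cos (m * t) := by
  unfold Gker
  rw [Finset.mul_sum]
  have : ∀ k ∈ Finset.range m, (1 - Real.cos t) * Dker k t =
      Real.cos (k * t) - Real.cos ((k + 1) * t) := fun k _ => Dker_mul k t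
  rw [Finset.sum_congr rfl this]
  have := Finset.sum_range_sub' (fun k : ℕ => Real.cos (k * t)) m
  push_cast at this ⊢
  rw [this]
  simp

lemma sum_odd (m : ℕ) : ∑ k ∈ Finset.range m, (1 + 2 * (k : ℝ)) = (m : ℝ) ^ 2 := by
  induction m with
  | zero => simp
  | succ m ih => rw [Finset.sum_range_succ, ih]; push_cast; ring

lemma Gker_at_one {t : ℝ} (ht : Real.cos t = 1) (m : ℕ) : Gker m t = (m : ℝ) ^ 2 := by
  obtain ⟨n, hn⟩ := (Real.cos_eq_one_iff t).mp ht
  have hcos : ∀ j : ℕ, Real.cos (((j : ℝ) + 1) * t) = 1 := by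
    intro j
    rw [← hn]
    have : ((j : ℝ) + 1) * ((n : ℝ) * (2 * π)) = ((((j : ℕ) + 1 : ℕ) : ℤ) * n : ℤ) * (2 * π) := by
      push_cast; ring
    rw [this, Real.cos_int_mul_two_pi]
  have hD : ∀ k : ℕ, Dker k t = 1 + 2 * (k : ℝ) := by
    intro k
    unfold Dker
    rw [Finset.sum_congr rfl (fun j _ => hcos j)]
    simp
  unfold Gker
  rw [Finset.sum_congr rfl (fun k _ => hD k)]
  exact sum_odd m

lemma integral_cos_mul {c : ℝ} (hc : c ≠ 0) (a b : ℝ) :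
    ∫ t in a..b, Real.cos (c * t) = Real.sin (c * b) / c - Real.sin (c * a) / c := by
  have h : ∀ x : ℝ, HasDerivAt (fun y => Real.sin (c * y) / c) (Real.cos (c * x)) x := by
    intro x
    have h1 : HasDerivAt (fun y : ℝ => c * y) c x := by
      simpa using (hasDerivAt_id x).const_mul c
    have h2 := (Real.hasDerivAt_sin (c * x)).comp x h1
    have h3 := h2.div_const c
    simpa [mul_comm, mul_div_assoc, hc] using h3
  rw [intervalIntegral.integral_eq_sub_of_hasDerivAt (fun x _ => h x)
    ((Real.continuous_cos.comp (continuous_const.mul continuous_id)).intervalIntegrable a b)]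

lemma integral_Dker (k : ℕ) : ∫ t in (-π)..π, Dker k t = 2 * π := by
  unfold Dker
  have hInt : ∀ j ∈ Finset.range k,
      IntervalIntegrable (fun t => Real.cos (((j : ℝ) + 1) * t)) volume (-π) π := by
    intro j _
    exact (Real.continuous_cos.comp (by fun_prop)).intervalIntegrable _ _
  rw [intervalIntegral.integral_add (intervalIntegrable_const)
      (((by fun_prop : Continuous fun t : ℝ =>
        2 * ∑ j ∈ Finset.range k, Real.cos ((j + 1) * t))).intervalIntegrable _ _),
    intervalIntegral.integral_const_mul, intervalIntegral.integral_finset_sum hInt]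
  have hz : ∀ j ∈ Finset.range k, (∫ t in (-π)..π, Real.cos (((j : ℝ) + 1) * t)) = 0 := by
    intro j _
    have hc : ((j : ℝ) + 1) ≠ 0 := by positivity
    rw [integral_cos_mul hc]
    have h1 : ((j : ℝ) + 1) * π = ((j + 1 : ℕ) : ℝ) * π := by push_cast; ring
    have h2 : ((j : ℝ) + 1) * (-π) = -(((j + 1 : ℕ) : ℝ) * π) := by push_cast; ring
    rw [h1, h2, Real.sin_neg, Real.sin_nat_mul_pi]
    simp
  rw [Finset.sum_congr rfl hz]
  simp
  ring

lemma integral_Gker (m : ℕ) : ∫ t in (-π)..π, Gker m t = 2 * π * m := by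
  unfold Gker
  rw [intervalIntegral.integral_finset_sum
    (fun k (_ : k ∈ Finset.range m) => (Dker_cont k).intervalIntegrable (-π) π)]
  rw [Finset.sum_congr rfl (fun k _ => integral_Dker k)]
  simp [mul_comm]

lemma key_cos (m : ℕ) (x : ℝ) (E : ℝ → ℝ)
    (h_ne : ∀ t, Real.cos t ≠ 1 →
      E t = (Real.cos (m * (x + t)) - 2 * Real.cos (m * x)
              + Real.cos (m * (x - t))) / (2 * (1 - Real.cos t)))
    (h_eq : ∀ t, Real.cos t = 1 → E t = -(m : ℝ) ^ 2 * Real.cos (m * x)) :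
    ∀ t, E t = -Real.cos (m * x) * Gker m t := by
  intro t
  by_cases ht : Real.cos t = 1
  · rw [h_eq t ht, Gker_at_one ht]; ring
  · rw [h_ne t ht]
    have hnum : Real.cos (m * (x + t)) - 2 * Real.cos (m * x) + Real.cos (m * (x - t))
        = -2 * Real.cos (m * x) * (1 - Real.cos (m * t)) := by
      have e1 : (m : ℝ) * (x + t) = m * x + m * t := by ring
      have e2 : (m : ℝ) * (x - t) = m * x - m * t := by ring
      rw [e1, e2, Real.cos_add, Real.cos_sub]; ring
    have hG := Gker_mul m t
    have hden : (1 : ℝ) - Real.cos t ≠ 0 := sub_ne_zero.mpr (Ne.symm ht)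
    rw [hnum, ← hG]
    field_simp

lemma key_sin (m : ℕ) (x : ℝ) (E : ℝ → ℝ)
    (h_ne : ∀ t, Real.cos t ≠ 1 →
      E t = (Real.sin (m * (x + t)) - 2 * Real.sin (m * x)
              + Real.sin (m * (x - t))) / (2 * (1 - Real.cos t)))
    (h_eq : ∀ t, Real.cos t = 1 → E t = -(m : ℝ) ^ 2 * Real.sin (m * x)) :
    ∀ t, E t = -Real.sin (m * x) * Gker m t := by
  intro t
  by_cases ht : Real.cos t = 1
  · rw [h_eq t ht, Gker_at_one ht]; ring
  · rw [h_ne t ht]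
    have hnum : Real.sin (m * (x + t)) - 2 * Real.sin (m * x) + Real.sin (m * (x - t))
        = -2 * Real.sin (m * x) * (1 - Real.cos (m * t)) := by
      have e1 : (m : ℝ) * (x + t) = m * x + m * t := by ring
      have e2 : (m : ℝ) * (x - t) = m * x - m * t := by ring
      rw [e1, e2, Real.sin_add, Real.sin_sub]; ring
    have hG := Gker_mul m t
    have hden : (1 : ℝ) - Real.cos t ≠ 0 := sub_ne_zero.mpr (Ne.symm ht)
    rw [hnum, ← hG]
    field_simp

/-- `L₁[cos(mt)](s) = (-1)^{m+1} m cos(ms)` and `L₁[sin(mt)](s) = (-1)^m m sin(ms)`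
for every `m : ℕ`, where `L₁[μ](s) = (1/(2π)) ∫_{-π}^{π} E_{π-s}[μ](t) dt` and
`E_x[μ]` is the continuous extension `(μ(x+t)-2μ(x)+μ(x-t))/(2(1-cos t))`, with
value `μ''(x)` when `cos t = 1`. -/
theorem stmt_14 (m : ℕ) (s : ℝ) (Ec Es : ℝ → ℝ)
    (hEc_ne : ∀ t, Real.cos t ≠ 1 →
      Ec t = (Real.cos (m * (π - s + t)) - 2 * Real.cos (m * (π - s))
              + Real.cos (m * (π - s - t))) / (2 * (1 - Real.cos t)))
    (hEc_eq : ∀ t, Real.cos t = 1 →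
      Ec t = -(m : ℝ) ^ 2 * Real.cos (m * (π - s)))
    (hEs_ne : ∀ t, Real.cos t ≠ 1 →
      Es t = (Real.sin (m * (π - s + t)) - 2 * Real.sin (m * (π - s))
              + Real.sin (m * (π - s - t))) / (2 * (1 - Real.cos t)))
    (hEs_eq : ∀ t, Real.cos t = 1 →
      Es t = -(m : ℝ) ^ 2 * Real.sin (m * (π - s))) :
    (1 / (2 * π)) * (∫ t in (-π)..π, Ec t) = (-1) ^ (m + 1) * m * Real.cos (m * s) ∧
    (1 / (2 * π)) * (∫ t in (-π)..π, Es t) = (-1) ^ m * m * Real.sin (m * s) := by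
  have hpi : (2 : ℝ) * π ≠ 0 := by positivity
  have hc := key_cos m (π - s) Ec hEc_ne hEc_eq
  have hs' := key_sin m (π - s) Es hEs_ne hEs_eq
  have hcosx : Real.cos (m * (π - s)) = (-1) ^ m * Real.cos (m * s) := by
    have : (m : ℝ) * (π - s) = (m : ℝ) * π - m * s := by ring
    rw [this, Real.cos_nat_mul_pi_sub]
  have hsinx : Real.sin (m * (π - s)) = -((-1) ^ m * Real.sin (m * s)) := by
    have : (m : ℝ) * (π - s) = (m : ℝ) * π - m * s := by ring
    rw [this, Real.sin_nat_mul_pi_sub]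
  constructor
  · calc (1 / (2 * π)) * (∫ t in (-π)..π, Ec t)
        = (1 / (2 * π)) * (∫ t in (-π)..π, -Real.cos (m * (π - s)) * Gker m t) := by
          rw [intervalIntegral.integral_congr (fun t _ => hc t)]
      _ = (1 / (2 * π)) * (-Real.cos (m * (π - s)) * (2 * π * m)) := by
          rw [intervalIntegral.integral_const_mul, integral_Gker]
      _ = (-1) ^ (m + 1) * m * Real.cos (m * s) := by
          rw [hcosx]; field_simp; ring
  · calc (1 / (2 * π)) * (∫ t in (-π)..π, Es t)
        = (1 / (2 * π)) * (∫ t in (-π)..π, -Real.sin (m * (π - s)) * Gker m t) := by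
          rw [intervalIntegral.integral_congr (fun t _ => hs' t)]
      _ = (1 / (2 * π)) * (-Real.sin (m * (π - s)) * (2 * π * m)) := by
          rw [intervalIntegral.integral_const_mul, integral_Gker]
      _ = (-1) ^ m * m * Real.sin (m * s) := by
          rw [hsinx]; field_simp
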